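/- Let E ⊂ ℝ be a finite set. There exist universal constants C and D and a linear operator Ē± : C²(E) → C²(ℝ) such that: (i) Ē±(f)|_E = f for all f ∈ C²(E); (ii) ‖Ē±(f)‖_{C²(ℝ)} ≤ C‖f‖_{C²(E)}; (iii) for each t ∈ ℝ there exists S(t) ⊂ E with #S(t) ≤ D such that for all f, g ∈ C²(E) with f = g on S(t), the m-th derivatives satisfy (d^m/dt^m)(Ē±(f))(t) = (d^m/dt^m)(Ē±(g))(t) for m = 0, 1, 2. -/

import Mathlib

open Set Real

set_option maxHeartbeats 1000000

noncomputable section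

/-- `(Σ_{m ≤ 2} |F^{(m)}(t)|²)^{1/2}`. -/
noncomputable def C2sum1 (F : ℝ → ℝ) (t : ℝ) : ℝ :=
  Real.sqrt (∑ m ∈ Finset.range 3, (iteratedDeriv m F t) ^ 2)

/-- `‖F‖_{C²(ℝ)} ≤ M`. -/
def C2NormLE1 (F : ℝ → ℝ) (M : ℝ) : Prop := ∀ t, C2sum1 F t ≤ M

/-- The trace norm `‖f‖_{C²(E)}` for `E ⊂ ℝ` (no nonnegativity constraint).  Note that for a
finite set `E`, every function on `E` is the restriction of a `C²` function, so `C²(E)` is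
the whole function space `ℝ^E`. -/
noncomputable def traceNorm1 (E : Set ℝ) (f : ℝ → ℝ) : ℝ :=
  sInf { M | ∃ F : ℝ → ℝ, ContDiff ℝ 2 F ∧ (∀ t ∈ E, F t = f t) ∧ C2NormLE1 F M }

namespace C2Ext
open Filter

def p1 (x : ℝ) : ℝ := max x 0
def p2 (x : ℝ) : ℝ := (max x 0)^2
def p3 (x : ℝ) : ℝ := (max x 0)^3
def p4 (x : ℝ) : ℝ := (max x 0)^4

lemma p1_of_nonpos {x : ℝ} (h : x ≤ 0) : p1 x = 0 := by simp [p1, max_eq_right h]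
lemma p2_of_nonpos {x : ℝ} (h : x ≤ 0) : p2 x = 0 := by simp [p2, max_eq_right h]
lemma p3_of_nonpos {x : ℝ} (h : x ≤ 0) : p3 x = 0 := by simp [p3, max_eq_right h]
lemma p4_of_nonpos {x : ℝ} (h : x ≤ 0) : p4 x = 0 := by simp [p4, max_eq_right h]
lemma p1_of_nonneg {x : ℝ} (h : 0 ≤ x) : p1 x = x := by simp [p1, max_eq_left h]
lemma p2_of_nonneg {x : ℝ} (h : 0 ≤ x) : p2 x = x^2 := by simp [p2, max_eq_left h]
lemma p3_of_nonneg {x : ℝ} (h : 0 ≤ x) : p3 x = x^3 := by simp [p3, max_eq_left h]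
lemma p4_of_nonneg {x : ℝ} (h : 0 ≤ x) : p4 x = x^4 := by simp [p4, max_eq_left h]

lemma p1_nonneg (x : ℝ) : 0 ≤ p1 x := le_max_right _ _
lemma p2_nonneg (x : ℝ) : 0 ≤ p2 x := sq_nonneg _
lemma p3_nonneg (x : ℝ) : 0 ≤ p3 x := pow_nonneg (p1_nonneg x) 3
lemma p4_nonneg (x : ℝ) : 0 ≤ p4 x := pow_nonneg (p1_nonneg x) 4

lemma p1_le_one {x : ℝ} (h : x ≤ 1) : p1 x ≤ 1 := max_le h zero_le_one
lemma p2_le_one {x : ℝ} (h : x ≤ 1) : p2 x ≤ 1 := pow_le_one₀ (p1_nonneg x) (p1_le_one h)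
lemma p3_le_one {x : ℝ} (h : x ≤ 1) : p3 x ≤ 1 := pow_le_one₀ (p1_nonneg x) (p1_le_one h)
lemma p4_le_one {x : ℝ} (h : x ≤ 1) : p4 x ≤ 1 := pow_le_one₀ (p1_nonneg x) (p1_le_one h)

lemma continuous_p1 : Continuous p1 := continuous_id.max continuous_const

private lemma hasDerivAt_pk {k : ℕ} (hk : 2 ≤ k) (x : ℝ) :
    HasDerivAt (fun y => (max y 0)^k) ((k:ℝ) * (max x 0)^(k-1)) x := by
  rcases lt_trichotomy x 0 with h | h | h
  · have he : (fun y => (max y 0)^k) =ᶠ[nhds x] (fun _ => (0:ℝ)) := by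
      filter_upwards [Iio_mem_nhds h] with y hy
      have : y < 0 := hy
      simp [max_eq_right this.le, zero_pow (by omega : k ≠ 0)]
    have h2 := (hasDerivAt_const x (0:ℝ)).congr_of_eventuallyEq he
    simpa [max_eq_right h.le, zero_pow (by omega : k - 1 ≠ 0)] using h2
  · subst h
    rw [hasDerivAt_iff_tendsto_slope]
    simp only [max_self, max_eq_right le_rfl, zero_pow (by omega : k ≠ 0),
      zero_pow (by omega : k - 1 ≠ 0), mul_zero]
    refine squeeze_zero_norm (a := fun y : ℝ => |y|^(k-1)) (fun y => ?_) ?_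
    · show |slope (fun y => (max y 0)^k) 0 y| ≤ |y|^(k-1)
      rcases le_or_gt y 0 with hy | hy
      · rw [slope_def_field, max_eq_right hy, zero_pow (by omega : k ≠ 0)]
        simp only [max_eq_right (le_refl (0:ℝ)), zero_pow (by omega : k ≠ 0)]
        simp
      · rw [slope_def_field, max_eq_left hy.le]
        simp only [max_eq_right (le_refl (0:ℝ)), zero_pow (by omega : k ≠ 0)]
        have hky : y^k = y^(k-1)*y := by rw [← pow_succ]; congr 1; omega
        rw [hky, sub_zero, sub_zero, mul_div_cancel_right₀ _ (ne_of_gt hy), abs_pow]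
    · have : Tendsto (fun y : ℝ => |y|^(k-1)) (nhds 0) (nhds (|(0:ℝ)|^(k-1))) :=
        (continuous_abs.pow (k-1)).tendsto 0
      simpa [zero_pow (by omega : k - 1 ≠ 0)] using this.mono_left nhdsWithin_le_nhds
  · have he : (fun y => (max y 0)^k) =ᶠ[nhds x] (fun y => y^k) := by
      filter_upwards [Ioi_mem_nhds h] with y hy
      have : (0:ℝ) < y := hy
      simp [max_eq_left this.le]
    have h2 := (hasDerivAt_pow k x).congr_of_eventuallyEq he
    simpa [max_eq_left h.le] using h2

lemma hasDerivAt_p2 (x : ℝ) : HasDerivAt p2 (2 * p1 x) x := by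
  exact (hasDerivAt_pk (le_refl 2) x).congr_deriv (by simp [p1])
lemma hasDerivAt_p3 (x : ℝ) : HasDerivAt p3 (3 * p2 x) x := by
  exact (hasDerivAt_pk (by norm_num : 2 ≤ 3) x).congr_deriv (by simp [p2])
lemma hasDerivAt_p4 (x : ℝ) : HasDerivAt p4 (4 * p3 x) x := by
  exact (hasDerivAt_pk (by norm_num : 2 ≤ 4) x).congr_deriv (by simp [p3])

lemma deriv_p2 : deriv p2 = fun x => 2 * p1 x := funext fun x => (hasDerivAt_p2 x).deriv
lemma deriv_p3 : deriv p3 = fun x => 3 * p2 x := funext fun x => (hasDerivAt_p3 x).deriv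
lemma deriv_p4 : deriv p4 = fun x => 4 * p3 x := funext fun x => (hasDerivAt_p4 x).deriv

lemma contDiff_p2 : ContDiff ℝ 1 p2 := by
  rw [show (1 : WithTop ℕ∞) = 0 + 1 by norm_num, contDiff_succ_iff_deriv]
  refine ⟨fun x => (hasDerivAt_p2 x).differentiableAt, by simp, ?_⟩
  rw [deriv_p2, contDiff_zero]
  exact continuous_const.mul continuous_p1
lemma contDiff_p3 : ContDiff ℝ 2 p3 := by
  rw [show (2 : WithTop ℕ∞) = 1 + 1 by norm_num, contDiff_succ_iff_deriv]
  refine ⟨fun x => (hasDerivAt_p3 x).differentiableAt, by simp, ?_⟩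
  rw [deriv_p3]
  exact contDiff_const.mul contDiff_p2
lemma contDiff_p4 : ContDiff ℝ 2 p4 := by
  rw [show (2 : WithTop ℕ∞) = 1 + 1 by norm_num, contDiff_succ_iff_deriv]
  refine ⟨fun x => (hasDerivAt_p4 x).differentiableAt, by simp, ?_⟩
  rw [deriv_p4]
  exact contDiff_const.mul (contDiff_p3.of_le (by norm_num))

/-- `C²` step function: `0` for `s ≤ 0`, `1` for `s ≥ 1`. -/
def stepF (s : ℝ) : ℝ := (9/2) * (p3 s - 3 * p3 (s - 1/3) + 3 * p3 (s - 2/3) - p3 (s - 1))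
def stepF1 (s : ℝ) : ℝ := (27/2) * (p2 s - 3 * p2 (s - 1/3) + 3 * p2 (s - 2/3) - p2 (s - 1))
def stepF2 (s : ℝ) : ℝ := 27 * (p1 s - 3 * p1 (s - 1/3) + 3 * p1 (s - 2/3) - p1 (s - 1))
/-- cumulative of step: `0` for `x ≤ 0`, `x - 1/2` for `x ≥ 1`. -/
def cumF (x : ℝ) : ℝ := (9/8) * (p4 x - 3 * p4 (x - 1/3) + 3 * p4 (x - 2/3) - p4 (x - 1))

lemma hasDerivAt_shift {F F' : ℝ → ℝ} (hF : ∀ y, HasDerivAt F (F' y) y) (c x : ℝ) :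
    HasDerivAt (fun y => F (y - c)) (F' (x - c)) x := by
  simpa [Function.comp_def] using (hF (x - c)).comp x ((hasDerivAt_id x).sub_const c)

lemma hasDerivAt_stepF (x : ℝ) : HasDerivAt stepF (stepF1 x) x := by
  have h := ((((hasDerivAt_p3 x).sub ((hasDerivAt_shift hasDerivAt_p3 (1/3) x).const_mul 3)).add
    ((hasDerivAt_shift hasDerivAt_p3 (2/3) x).const_mul 3)).sub
    (hasDerivAt_shift hasDerivAt_p3 1 x)).const_mul (9/2)
  exact h.congr_deriv (by simp only [stepF, stepF1, stepF2, cumF]; ring)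
lemma hasDerivAt_stepF1 (x : ℝ) : HasDerivAt stepF1 (stepF2 x) x := by
  have h := ((((hasDerivAt_p2 x).sub ((hasDerivAt_shift hasDerivAt_p2 (1/3) x).const_mul 3)).add
    ((hasDerivAt_shift hasDerivAt_p2 (2/3) x).const_mul 3)).sub
    (hasDerivAt_shift hasDerivAt_p2 1 x)).const_mul (27/2)
  exact h.congr_deriv (by simp only [stepF, stepF1, stepF2, cumF]; ring)
lemma hasDerivAt_cumF (x : ℝ) : HasDerivAt cumF (stepF x) x := by
  have h := ((((hasDerivAt_p4 x).sub ((hasDerivAt_shift hasDerivAt_p4 (1/3) x).const_mul 3)).add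
    ((hasDerivAt_shift hasDerivAt_p4 (2/3) x).const_mul 3)).sub
    (hasDerivAt_shift hasDerivAt_p4 1 x)).const_mul (9/8)
  exact h.congr_deriv (by simp only [stepF, stepF1, stepF2, cumF]; ring)

lemma contDiff_comb {F : ℝ → ℝ} (h : ContDiff ℝ 2 F) (c : ℝ) :
    ContDiff ℝ 2 (fun s : ℝ => c * (F s - 3 * F (s - 1/3) + 3 * F (s - 2/3) - F (s - 1))) := by
  have hsh : ∀ a : ℝ, ContDiff ℝ 2 (fun s : ℝ => F (s - a)) :=
    fun a => h.comp (contDiff_id.sub contDiff_const)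
  exact contDiff_const.mul (((h.sub ((contDiff_const.mul (hsh (1/3))))).add
    (contDiff_const.mul (hsh (2/3)))).sub (hsh 1))

lemma contDiff_stepF : ContDiff ℝ 2 stepF := contDiff_comb contDiff_p3 (9/2)
lemma contDiff_cumF : ContDiff ℝ 2 cumF := contDiff_comb contDiff_p4 (9/8)

lemma stepF_of_nonpos {s : ℝ} (h : s ≤ 0) : stepF s = 0 := by
  rw [stepF, p3_of_nonpos h, p3_of_nonpos (by linarith), p3_of_nonpos (by linarith),
    p3_of_nonpos (by linarith)]; ring
lemma stepF_of_ge_one {s : ℝ} (h : 1 ≤ s) : stepF s = 1 := by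
  rw [stepF, p3_of_nonneg (by linarith), p3_of_nonneg (by linarith),
    p3_of_nonneg (by linarith), p3_of_nonneg (by linarith)]; ring
lemma stepF1_of_nonpos {s : ℝ} (h : s ≤ 0) : stepF1 s = 0 := by
  rw [stepF1, p2_of_nonpos h, p2_of_nonpos (by linarith), p2_of_nonpos (by linarith),
    p2_of_nonpos (by linarith)]; ring
lemma stepF1_of_ge_one {s : ℝ} (h : 1 ≤ s) : stepF1 s = 0 := by
  rw [stepF1, p2_of_nonneg (by linarith), p2_of_nonneg (by linarith),
    p2_of_nonneg (by linarith), p2_of_nonneg (by linarith)]; ring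
lemma cumF_of_nonpos {x : ℝ} (h : x ≤ 0) : cumF x = 0 := by
  rw [cumF, p4_of_nonpos h, p4_of_nonpos (by linarith), p4_of_nonpos (by linarith),
    p4_of_nonpos (by linarith)]; ring
lemma cumF_of_ge_one {x : ℝ} (h : 1 ≤ x) : cumF x = x - 1/2 := by
  rw [cumF, p4_of_nonneg (by linarith), p4_of_nonneg (by linarith),
    p4_of_nonneg (by linarith), p4_of_nonneg (by linarith)]; ring

lemma abs_comb_le {F : ℝ → ℝ} {c B s : ℝ} (hc : 0 ≤ c) (h0 : ∀ y, 0 ≤ F y)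
    (h1 : ∀ y, y ≤ 1 → F y ≤ B) (hs : s ≤ 1) (hB : 0 ≤ B) :
    |c * (F s - 3 * F (s - 1/3) + 3 * F (s - 2/3) - F (s - 1))| ≤ c * 8 * B := by
  have b1 := h1 s hs; have b2 := h1 (s - 1/3) (by linarith)
  have b3 := h1 (s - 2/3) (by linarith); have b4 := h1 (s - 1) (by linarith)
  have n1 := h0 s; have n2 := h0 (s - 1/3); have n3 := h0 (s - 2/3); have n4 := h0 (s - 1)
  rw [abs_le]; constructor <;> nlinarith

lemma abs_stepF_le (s : ℝ) : |stepF s| ≤ 36 := by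
  rcases le_or_gt s 1 with h | h
  · have h9 := abs_comb_le (F := p3) (c := 9/2) (B := 1) (s := s) (by norm_num)
      p3_nonneg (fun y hy => p3_le_one hy) h zero_le_one
    simp only [stepF]
    exact le_trans h9 (by norm_num)
  · rw [stepF_of_ge_one h.le]; norm_num
lemma abs_stepF1_le (s : ℝ) : |stepF1 s| ≤ 108 := by
  rcases le_or_gt s 1 with h | h
  · have h9 := abs_comb_le (F := p2) (c := 27/2) (B := 1) (s := s) (by norm_num)
      p2_nonneg (fun y hy => p2_le_one hy) h zero_le_one
    simp only [stepF1]
    exact le_trans h9 (by norm_num)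
  · rw [stepF1_of_ge_one h.le]; norm_num
lemma abs_stepF2_le (s : ℝ) : |stepF2 s| ≤ 216 := by
  rcases le_or_gt s 1 with h | h
  · have h9 := abs_comb_le (F := p1) (c := 27) (B := 1) (s := s) (by norm_num)
      p1_nonneg (fun y hy => p1_le_one hy) h zero_le_one
    simp only [stepF2]
    exact le_trans h9 (by norm_num)
  · have h2 : stepF2 s = 0 := by
      rw [stepF2, p1_of_nonneg (by linarith), p1_of_nonneg (by linarith),
        p1_of_nonneg (by linarith), p1_of_nonneg (by linarith)]; ring
    rw [h2]; norm_num
lemma abs_cumF_le {x : ℝ} (h : x ≤ 1) : |cumF x| ≤ 9 := by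
  have h9 := abs_comb_le (F := p4) (c := 9/8) (B := 1) (s := x) (by norm_num)
    p4_nonneg (fun y hy => p4_le_one hy) h zero_le_one
  simp only [cumF]
  exact le_trans h9 (by norm_num)

/-- `C²` clamp: `flat s = s` on `[-1,1]`, constant outside `[-2, 2]`-ish, `|flat| ≤ 30`. -/
def flat (s : ℝ) : ℝ := cumF (s + 2) - cumF (s - 1) - 3/2
def flat1 (s : ℝ) : ℝ := stepF (s + 2) - stepF (s - 1)
def flat2 (s : ℝ) : ℝ := stepF1 (s + 2) - stepF1 (s - 1)

lemma hasDerivAt_shift' {F F' : ℝ → ℝ} (hF : ∀ y, HasDerivAt F (F' y) y) (c x : ℝ) :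
    HasDerivAt (fun y => F (y + c)) (F' (x + c)) x := by
  simpa [Function.comp_def] using (hF (x + c)).comp x ((hasDerivAt_id x).add_const c)

lemma hasDerivAt_flat (x : ℝ) : HasDerivAt flat (flat1 x) x :=
  ((hasDerivAt_shift' hasDerivAt_cumF 2 x).sub (hasDerivAt_shift hasDerivAt_cumF 1 x)).sub_const _
lemma hasDerivAt_flat1 (x : ℝ) : HasDerivAt flat1 (flat2 x) x :=
  (hasDerivAt_shift' hasDerivAt_stepF 2 x).sub (hasDerivAt_shift hasDerivAt_stepF 1 x)

lemma contDiff_flat : ContDiff ℝ 2 flat :=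
  ((contDiff_cumF.comp (contDiff_id.add contDiff_const)).sub
    (contDiff_cumF.comp (contDiff_id.sub contDiff_const))).sub contDiff_const

lemma flat_eq_id {s : ℝ} (h1 : -1 ≤ s) (h2 : s ≤ 1) : flat s = s := by
  rw [flat, cumF_of_ge_one (by linarith), cumF_of_nonpos (by linarith)]; ring
lemma flat1_eq_one {s : ℝ} (h1 : -1 ≤ s) (h2 : s ≤ 1) : flat1 s = 1 := by
  rw [flat1, stepF_of_ge_one (by linarith), stepF_of_nonpos (by linarith)]; norm_num
lemma flat2_eq_zero {s : ℝ} (h1 : -1 ≤ s) (h2 : s ≤ 1) : flat2 s = 0 := by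
  rw [flat2, stepF1_of_ge_one (by linarith), stepF1_of_nonpos (by linarith)]; ring

lemma abs_flat_le (s : ℝ) : |flat s| ≤ 30 := by
  rcases le_or_gt s 1 with h | h
  · have h2 : cumF (s - 1) = 0 := cumF_of_nonpos (by linarith)
    rcases le_or_gt s (-1) with h3 | h3
    · have h9 := abs_cumF_le (x := s + 2) (by linarith)
      rw [abs_le] at h9
      rw [flat, h2, abs_le]; constructor <;> linarith [h9.1, h9.2]
    · rw [flat, h2, cumF_of_ge_one (by linarith), abs_le]; constructor <;> linarith
  · rcases le_or_gt s 2 with h3 | h3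
    · have h9 := abs_cumF_le (x := s - 1) (by linarith)
      rw [abs_le] at h9
      rw [flat, cumF_of_ge_one (by linarith : (1:ℝ) ≤ s + 2), abs_le]
      constructor <;> linarith [h9.1, h9.2]
    · rw [flat, cumF_of_ge_one (by linarith : (1:ℝ) ≤ s + 2),
        cumF_of_ge_one (by linarith : (1:ℝ) ≤ s - 1), abs_le]
      constructor <;> linarith
lemma abs_flat1_le (s : ℝ) : |flat1 s| ≤ 72 := by
  have h1 := abs_stepF_le (s + 2); have h2 := abs_stepF_le (s - 1)
  rw [flat1]; rw [abs_le] at *; constructor <;> linarith [h1.1, h1.2, h2.1, h2.2]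
lemma abs_flat2_le (s : ℝ) : |flat2 s| ≤ 216 := by
  have h1 := abs_stepF1_le (s + 2); have h2 := abs_stepF1_le (s - 1)
  rw [flat2]; rw [abs_le] at *; constructor <;> linarith [h1.1, h1.2, h2.1, h2.2]
lemma flat_zero : flat 0 = 0 := by
  rw [flat_eq_id (by norm_num) (by norm_num)]

/-! ### Geometry and the extension operator -/

def xx (l : List ℝ) (i : ℕ) : ℝ := l.getD i 0

lemma xx_lt_xx {l : List ℝ} (hl : l.Pairwise (· < ·)) {i j : ℕ} (hij : i < j)
    (hj : j < l.length) : xx l i < xx l j := by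
  have hi : i < l.length := lt_trans hij hj
  rw [xx, xx, List.getD_eq_getElem l 0 hi, List.getD_eq_getElem l 0 hj]
  exact List.pairwise_iff_get.mp hl ⟨i, hi⟩ ⟨j, hj⟩ hij

lemma xx_mem {l : List ℝ} {i : ℕ} (h : i < l.length) : xx l i ∈ l := by
  rw [xx, List.getD_eq_getElem l 0 h]; exact List.getElem_mem h

def nbr (l : List ℝ) (i : ℕ) : ℝ :=
  if l.length ≤ 1 then xx l 0
  else if i = 0 then xx l 1
  else if i = l.length - 1 then xx l (l.length - 2)
  else if xx l (i+1) - xx l i ≤ xx l i - xx l (i-1) then xx l (i+1) else xx l (i-1)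

lemma nbr_mem {l : List ℝ} {i : ℕ} (h1 : 1 ≤ l.length) (hi : i < l.length) :
    nbr l i ∈ l := by
  rw [nbr]
  split
  · exact xx_mem (by omega)
  · split
    · exact xx_mem (by omega)
    · split
      · exact xx_mem (by omega)
      · split
        · exact xx_mem (by omega)
        · exact xx_mem (by omega)

lemma nbr_ne {l : List ℝ} (hl : l.Pairwise (· < ·)) {i : ℕ} (h2 : 2 ≤ l.length)
    (hi : i < l.length) : nbr l i ≠ xx l i := by
  rw [nbr]
  split
  · omega
  · split
    · subst ‹i = 0›; exact ne_of_gt (xx_lt_xx hl (by omega) (by omega))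
    · split
      · have : i = l.length - 1 := ‹_›
        subst this
        exact ne_of_lt (xx_lt_xx hl (by omega) (by omega))
      · split
        · exact ne_of_gt (xx_lt_xx hl (by omega) (by omega))
        · exact ne_of_lt (xx_lt_xx hl (by omega) (by omega))

lemma nbr_le_right {l : List ℝ} (hl : l.Pairwise (· < ·)) {i : ℕ} (h2 : 2 ≤ l.length)
    (hi : i + 1 < l.length) : |nbr l i - xx l i| ≤ xx l (i+1) - xx l i := by
  rw [nbr]
  split
  · omega
  · split
    · subst ‹i = 0›
      rw [abs_of_nonneg (by linarith [xx_lt_xx hl (by omega : 0 < 1) (by omega)])]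
    · split
      · omega
      · split
        · rw [abs_of_nonneg (by linarith [xx_lt_xx hl (by omega : i < i + 1) hi])]
        · have hi1 : 1 ≤ i := by omega
          have h3 : xx l (i-1) < xx l i := xx_lt_xx hl (by omega) (by omega)
          rw [abs_of_nonpos (by linarith)]
          linarith [lt_of_not_ge ‹¬ xx l (i+1) - xx l i ≤ xx l i - xx l (i-1)›]

lemma nbr_le_left {l : List ℝ} (hl : l.Pairwise (· < ·)) {i : ℕ} (h2 : 2 ≤ l.length)
    (hi : i < l.length) (hi1 : 1 ≤ i) : |nbr l i - xx l i| ≤ xx l i - xx l (i-1) := by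
  rw [nbr]
  split
  · omega
  · split
    · omega
    · split
      · have : i = l.length - 1 := ‹_›
        have h3 : xx l (l.length - 2) < xx l (l.length - 1) := xx_lt_xx hl (by omega) (by omega)
        rw [abs_of_nonpos (by rw [this]; linarith)]
        rw [this]; have : l.length - 1 - 1 = l.length - 2 := by omega
        rw [this]; linarith
      · split
        · have h3 : xx l i < xx l (i+1) := xx_lt_xx hl (by omega) (by omega)
          rw [abs_of_nonneg (by linarith)]
          linarith [‹xx l (i+1) - xx l i ≤ xx l i - xx l (i-1)›]
        · have h3 : xx l (i-1) < xx l i := xx_lt_xx hl (by omega) (by omega)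
          rw [abs_of_nonpos (by linarith)]
          linarith

/-! ### The operator -/

def dd (l : List ℝ) (f : ℝ → ℝ) (i : ℕ) : ℝ :=
  (f (nbr l i) - f (xx l i)) * (nbr l i - xx l i)⁻¹

def RR (l : List ℝ) (f : ℝ → ℝ) (i : ℕ) (t : ℝ) : ℝ :=
  f (xx l i) + dd l f i * flat (t - xx l i)
def RR1 (l : List ℝ) (f : ℝ → ℝ) (i : ℕ) (t : ℝ) : ℝ := dd l f i * flat1 (t - xx l i)
def RR2 (l : List ℝ) (f : ℝ → ℝ) (i : ℕ) (t : ℝ) : ℝ := dd l f i * flat2 (t - xx l i)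

def ww (l : List ℝ) (i : ℕ) : ℝ := xx l (i+1) - xx l i
def aa (l : List ℝ) (i : ℕ) : ℝ := xx l i + ww l i / 4
def mm (l : List ℝ) (i : ℕ) : ℝ := 2 / ww l i

def th (l : List ℝ) (i : ℕ) (t : ℝ) : ℝ := stepF ((t - aa l i) * mm l i)
def th1 (l : List ℝ) (i : ℕ) (t : ℝ) : ℝ := stepF1 ((t - aa l i) * mm l i) * mm l i
def th2 (l : List ℝ) (i : ℕ) (t : ℝ) : ℝ := stepF2 ((t - aa l i) * mm l i) * (mm l i)^2

def Lfun (l : List ℝ) (f : ℝ → ℝ) (t : ℝ) : ℝ :=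
  RR l f 0 t + ∑ i ∈ Finset.range (l.length - 1), (RR l f (i+1) t - RR l f i t) * th l i t

def Lfun1 (l : List ℝ) (f : ℝ → ℝ) (t : ℝ) : ℝ :=
  RR1 l f 0 t + ∑ i ∈ Finset.range (l.length - 1),
    ((RR1 l f (i+1) t - RR1 l f i t) * th l i t + (RR l f (i+1) t - RR l f i t) * th1 l i t)

def Lfun2 (l : List ℝ) (f : ℝ → ℝ) (t : ℝ) : ℝ :=
  RR2 l f 0 t + ∑ i ∈ Finset.range (l.length - 1),
    (((RR2 l f (i+1) t - RR2 l f i t) * th l i t + (RR1 l f (i+1) t - RR1 l f i t) * th1 l i t)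
      + ((RR1 l f (i+1) t - RR1 l f i t) * th1 l i t + (RR l f (i+1) t - RR l f i t) * th2 l i t))

lemma hasDerivAt_RR (l : List ℝ) (f : ℝ → ℝ) (i : ℕ) (t : ℝ) :
    HasDerivAt (RR l f i) (RR1 l f i t) t := by
  have h := ((hasDerivAt_shift hasDerivAt_flat (xx l i) t).const_mul (dd l f i)).const_add
    (f (xx l i))
  exact h

lemma hasDerivAt_RR1 (l : List ℝ) (f : ℝ → ℝ) (i : ℕ) (t : ℝ) :
    HasDerivAt (RR1 l f i) (RR2 l f i t) t :=
  (hasDerivAt_shift hasDerivAt_flat1 (xx l i) t).const_mul (dd l f i)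

lemma hasDerivAt_arg (l : List ℝ) (i : ℕ) (t : ℝ) :
    HasDerivAt (fun y => (y - aa l i) * mm l i) (mm l i) t := by
  simpa using ((hasDerivAt_id t).sub_const (aa l i)).mul_const (mm l i)

lemma hasDerivAt_th (l : List ℝ) (i : ℕ) (t : ℝ) : HasDerivAt (th l i) (th1 l i t) t :=
  (hasDerivAt_stepF _).comp t (hasDerivAt_arg l i t)

lemma hasDerivAt_th1 (l : List ℝ) (i : ℕ) (t : ℝ) : HasDerivAt (th1 l i) (th2 l i t) t := by
  have h := ((hasDerivAt_stepF1 _).comp t (hasDerivAt_arg l i t)).mul_const (mm l i)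
  refine h.congr_deriv ?_
  rw [th2]; ring

lemma hasDerivAt_Lfun (l : List ℝ) (f : ℝ → ℝ) (t : ℝ) :
    HasDerivAt (Lfun l f) (Lfun1 l f t) t := by
  refine HasDerivAt.add (hasDerivAt_RR l f 0 t) (HasDerivAt.fun_sum fun i _ => ?_)
  exact ((hasDerivAt_RR l f (i+1) t).sub (hasDerivAt_RR l f i t)).mul (hasDerivAt_th l i t)

lemma hasDerivAt_Lfun1 (l : List ℝ) (f : ℝ → ℝ) (t : ℝ) :
    HasDerivAt (Lfun1 l f) (Lfun2 l f t) t := by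
  refine HasDerivAt.add (hasDerivAt_RR1 l f 0 t) (HasDerivAt.fun_sum fun i _ => ?_)
  exact (((hasDerivAt_RR1 l f (i+1) t).sub (hasDerivAt_RR1 l f i t)).mul (hasDerivAt_th l i t)).add
    (((hasDerivAt_RR l f (i+1) t).sub (hasDerivAt_RR l f i t)).mul (hasDerivAt_th1 l i t))

lemma deriv_Lfun (l : List ℝ) (f : ℝ → ℝ) : deriv (Lfun l f) = Lfun1 l f :=
  funext fun t => (hasDerivAt_Lfun l f t).deriv

lemma deriv_Lfun1 (l : List ℝ) (f : ℝ → ℝ) : deriv (Lfun1 l f) = Lfun2 l f :=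
  funext fun t => (hasDerivAt_Lfun1 l f t).deriv

lemma iteratedDeriv_Lfun_one (l : List ℝ) (f : ℝ → ℝ) :
    iteratedDeriv 1 (Lfun l f) = Lfun1 l f := by rw [iteratedDeriv_one, deriv_Lfun]
lemma iteratedDeriv_Lfun_two (l : List ℝ) (f : ℝ → ℝ) :
    iteratedDeriv 2 (Lfun l f) = Lfun2 l f := by
  rw [show (2:ℕ) = 1 + 1 from rfl, iteratedDeriv_succ, iteratedDeriv_Lfun_one, deriv_Lfun1]

lemma contDiff_Lfun (l : List ℝ) (f : ℝ → ℝ) : ContDiff ℝ 2 (Lfun l f) := by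
  have hR : ∀ i : ℕ, ContDiff ℝ 2 (RR l f i) := fun i =>
    contDiff_const.add (contDiff_const.mul (contDiff_flat.comp
      (contDiff_id.sub contDiff_const)))
  have hth : ∀ i : ℕ, ContDiff ℝ 2 (th l i) := fun i =>
    contDiff_stepF.comp ((contDiff_id.sub contDiff_const).mul contDiff_const)
  exact (hR 0).add (ContDiff.sum fun i _ => ((hR (i+1)).sub (hR i)).mul (hth i))

/-! ### values of `th` -/

lemma th_eq_zero {l : List ℝ} {i : ℕ} {t : ℝ} (hw : 0 < ww l i) (h : t ≤ aa l i) :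
    th l i t = 0 := by
  apply stepF_of_nonpos
  apply mul_nonpos_of_nonpos_of_nonneg (by linarith)
  rw [mm]; positivity

lemma th_eq_one {l : List ℝ} {i : ℕ} {t : ℝ} (hw : 0 < ww l i)
    (h : xx l i + 3 * ww l i / 4 ≤ t) : th l i t = 1 := by
  apply stepF_of_ge_one
  have h2 : ww l i / 2 ≤ t - aa l i := by rw [aa]; linarith
  calc (1:ℝ) = (ww l i / 2) * (2 / ww l i) := by field_simp
    _ ≤ (t - aa l i) * (2 / ww l i) := by
        apply mul_le_mul_of_nonneg_right h2; positivity
    _ = (t - aa l i) * mm l i := by rw [mm]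

/-! ### Interpolation -/

lemma RR_self (l : List ℝ) (f : ℝ → ℝ) (i : ℕ) : RR l f i (xx l i) = f (xx l i) := by
  rw [RR, sub_self, flat_zero]; ring

lemma Lfun_interp {l : List ℝ} (hl : l.Pairwise (· < ·)) (f : ℝ → ℝ) {j : ℕ}
    (hj : j < l.length) : Lfun l f (xx l j) = f (xx l j) := by
  have hww : ∀ i : ℕ, i + 1 < l.length → 0 < ww l i := fun i hi => by
    rw [ww]; linarith [xx_lt_xx hl (Nat.lt_succ_self i) hi]
  have hstep1 : ∑ i ∈ Finset.range (l.length - 1),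
      (RR l f (i+1) (xx l j) - RR l f i (xx l j)) * th l i (xx l j)
      = ∑ i ∈ Finset.range j, (RR l f (i+1) (xx l j) - RR l f i (xx l j)) := by
    rw [← Finset.sum_subset (Finset.range_subset_range.mpr (by omega : j ≤ l.length - 1))]
    · apply Finset.sum_congr rfl
      intro i hi
      have hi' : i < j := Finset.mem_range.mp hi
      have hi2 : i + 1 < l.length := by omega
      have hmono : xx l (i+1) ≤ xx l j := by
        rcases eq_or_lt_of_le (by omega : i + 1 ≤ j) with h | h
        · rw [h]
        · exact (xx_lt_xx hl h hj).le
      have hw := hww i hi2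
      rw [ww] at hw
      rw [th_eq_one (hww i hi2) (by rw [ww]; linarith), mul_one]
    · intro i hi hni
      have hij : j ≤ i := by simpa using hni
      have hi2 : i + 1 < l.length := by
        have := Finset.mem_range.mp hi; omega
      have hmono : xx l j ≤ xx l i := by
        rcases eq_or_lt_of_le hij with h | h
        · rw [h]
        · exact (xx_lt_xx hl h (by omega)).le
      rw [th_eq_zero (hww i hi2) (by rw [aa]; linarith [hww i hi2]), mul_zero]
  rw [Lfun, hstep1, Finset.sum_range_sub (fun i => RR l f i (xx l j)), RR_self]
  ring_nf

/-! ### Linearity -/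

lemma RR_add (l : List ℝ) (f g : ℝ → ℝ) (i : ℕ) (t : ℝ) :
    RR l (f + g) i t = RR l f i t + RR l g i t := by
  simp only [RR, dd, Pi.add_apply]; ring

lemma RR_smul (l : List ℝ) (c : ℝ) (f : ℝ → ℝ) (i : ℕ) (t : ℝ) :
    RR l (c • f) i t = c * RR l f i t := by
  simp only [RR, dd, Pi.smul_apply, smul_eq_mul]; ring

lemma Lfun_add (l : List ℝ) (f g : ℝ → ℝ) :
    Lfun l (f + g) = Lfun l f + Lfun l g := by
  funext t
  simp only [Lfun, Pi.add_apply]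
  have h : ∀ i ∈ Finset.range (l.length - 1),
      (RR l (f+g) (i+1) t - RR l (f+g) i t) * th l i t
      = (RR l f (i+1) t - RR l f i t) * th l i t
        + (RR l g (i+1) t - RR l g i t) * th l i t := by
    intro i _; rw [RR_add, RR_add]; ring
  rw [Finset.sum_congr rfl h, Finset.sum_add_distrib, RR_add]; ring

lemma Lfun_smul (l : List ℝ) (c : ℝ) (f : ℝ → ℝ) :
    Lfun l (c • f) = c • Lfun l f := by
  funext t
  simp only [Lfun, Pi.smul_apply, smul_eq_mul]
  have h : ∀ i ∈ Finset.range (l.length - 1),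
      (RR l (c • f) (i+1) t - RR l (c • f) i t) * th l i t
      = c * ((RR l f (i+1) t - RR l f i t) * th l i t) := by
    intro i _; rw [RR_smul, RR_smul]; ring
  rw [Finset.sum_congr rfl h, ← Finset.mul_sum, RR_smul]; ring

/-! ### Local collapse -/

lemma collapse {l : List ℝ} (hl : l.Pairwise (· < ·)) (hn : 1 ≤ l.length) (t : ℝ) :
    (∃ k < l.length, ∀ f : ℝ → ℝ, Lfun l f =ᶠ[nhds t] RR l f k) ∨
    (∃ i, i + 1 < l.length ∧ xx l i + ww l i / 8 ≤ t ∧ t ≤ xx l i + 7 * ww l i / 8 ∧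
      ∀ f : ℝ → ℝ, Lfun l f =ᶠ[nhds t]
        fun s => RR l f i s + (RR l f (i+1) s - RR l f i s) * th l i s) := by
  have hww : ∀ i : ℕ, i + 1 < l.length → 0 < ww l i := fun i hi => by
    rw [ww]; linarith [xx_lt_xx hl (Nat.lt_succ_self i) hi]
  by_cases hcase : ∃ i, i + 1 < l.length ∧ xx l i + ww l i / 8 < t ∧ t < xx l i + 7 * ww l i / 8
  · obtain ⟨i, hi, h1, h2⟩ := hcase
    right
    refine ⟨i, hi, h1.le, h2.le, fun f => ?_⟩
    have hloc : ∀ᶠ s in nhds t, ∀ j ∈ Finset.range (l.length - 1), j ≠ i →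
        th l j s = (if j < i then 1 else 0) := by
      rw [Filter.eventually_all_finset]
      intro j hj
      have hj2 : j + 1 < l.length := by have := Finset.mem_range.mp hj; omega
      rcases lt_trichotomy j i with hji | hji | hji
      · have hx : xx l (j+1) ≤ xx l i := by
          rcases eq_or_lt_of_le (by omega : j + 1 ≤ i) with h | h
          · rw [h]
          · exact (xx_lt_xx hl h (by omega)).le
        have hopen : t ∈ {s : ℝ | xx l j + 3 * ww l j / 4 < s} := by
          simp only [mem_setOf_eq]
          have := hww j hj2
          rw [ww] at this ⊢
          linarith [hww i hi]
        filter_upwards [IsOpen.mem_nhds (isOpen_lt continuous_const continuous_id) hopen]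
          with s hs _
        rw [if_pos hji]
        exact th_eq_one (hww j hj2) (le_of_lt hs)
      · exact Filter.Eventually.of_forall (fun s h => absurd hji h)
      · have hx : xx l (i+1) ≤ xx l j := by
          rcases eq_or_lt_of_le (by omega : i + 1 ≤ j) with h | h
          · rw [h]
          · exact (xx_lt_xx hl h (by omega)).le
        have hopen : t ∈ {s : ℝ | s < aa l j} := by
          simp only [mem_setOf_eq, aa]
          have hwj := hww j hj2
          have hwi := hww i hi
          have h2' := h2
          rw [ww] at hwi hwj h2'
          rw [ww]
          linarith
        filter_upwards [IsOpen.mem_nhds (isOpen_lt continuous_id continuous_const) hopen]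
          with s hs _
        rw [if_neg (by omega)]
        exact th_eq_zero (hww j hj2) (le_of_lt hs)
    filter_upwards [hloc] with s hs
    have himem : i ∈ Finset.range (l.length - 1) := Finset.mem_range.mpr (by omega)
    rw [Lfun, ← Finset.sum_erase_add _ _ himem]
    have herase : ∑ j ∈ (Finset.range (l.length - 1)).erase i,
        (RR l f (j+1) s - RR l f j s) * th l j s
        = ∑ j ∈ Finset.range i, (RR l f (j+1) s - RR l f j s) := by
      rw [← Finset.sum_subset (s₁ := Finset.range i)]
      · apply Finset.sum_congr rfl
        intro j hj
        have hji : j < i := Finset.mem_range.mp hj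
        rw [hs j (by simp; omega) (by omega), if_pos hji, mul_one]
      · intro j hj
        simp only [Finset.mem_erase, Finset.mem_range] at hj
        exact Finset.mem_erase.mpr ⟨by omega, Finset.mem_range.mpr (by omega)⟩
      · intro j hj hnj
        simp only [Finset.mem_erase, Finset.mem_range] at hj
        simp only [Finset.mem_range] at hnj
        rw [hs j (by simp [hj.2]) hj.1, if_neg (by omega), mul_zero]
    rw [herase, Finset.sum_range_sub (fun j => RR l f j s)]
    ring
  · left
    push_neg at hcase
    set K := (Finset.range (l.length - 1)).filter (fun i => xx l i + 7 * ww l i / 8 ≤ t) with hK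
    have hdc : ∀ j ∈ K, ∀ j' < j, j' ∈ K := by
      intro j hj j' hj'
      simp only [hK, Finset.mem_filter, Finset.mem_range] at hj ⊢
      have hj2 : j + 1 < l.length := by omega
      have hj'2 : j' + 1 < l.length := by omega
      refine ⟨by omega, ?_⟩
      have hx : xx l (j'+1) ≤ xx l j := by
        rcases eq_or_lt_of_le (by omega : j' + 1 ≤ j) with h | h
        · rw [h]
        · exact (xx_lt_xx hl h (by omega)).le
      have h1 := hww j hj2
      have h2 := hww j' hj'2
      have h3 := hj.2
      rw [ww] at h1 h2 h3 ⊢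
      linarith
    have hKrange : K = Finset.range K.card := by
      rcases K.eq_empty_or_nonempty with h | h
      · rw [h]; simp
      · have hM : K = Finset.range (K.max' h + 1) := by
          ext j
          simp only [Finset.mem_range]
          constructor
          · intro hj; exact Nat.lt_succ_of_le (Finset.le_max' K j hj)
          · intro hj
            rcases eq_or_lt_of_le (Nat.le_of_lt_succ hj) with h2 | h2
            · rw [h2]; exact K.max'_mem h
            · exact hdc _ (K.max'_mem h) _ h2
        rw [hM, Finset.card_range]
    set k := K.card with hk
    have hkle : k ≤ l.length - 1 := by
      rw [hk]
      calc K.card ≤ (Finset.range (l.length - 1)).card := Finset.card_le_card (Finset.filter_subset _ _)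
        _ = l.length - 1 := Finset.card_range _
    refine ⟨k, by omega, fun f => ?_⟩
    have hloc : ∀ᶠ s in nhds t, ∀ j ∈ Finset.range (l.length - 1),
        th l j s = (if j < k then 1 else 0) := by
      rw [Filter.eventually_all_finset]
      intro j hj
      have hj2 : j + 1 < l.length := by have := Finset.mem_range.mp hj; omega
      by_cases hjk : j < k
      · have hjK : j ∈ K := by rw [hKrange]; exact Finset.mem_range.mpr hjk
        have hjt : xx l j + 7 * ww l j / 8 ≤ t := (Finset.mem_filter.mp hjK).2
        have hopen : t ∈ {s : ℝ | xx l j + 3 * ww l j / 4 < s} := by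
          simp only [mem_setOf_eq]
          linarith [hww j hj2]
        filter_upwards [IsOpen.mem_nhds (isOpen_lt continuous_const continuous_id) hopen]
          with s hs
        rw [if_pos hjk]
        exact th_eq_one (hww j hj2) (le_of_lt hs)
      · have hjK : j ∉ K := by rw [hKrange]; simpa using hjk
        have hjt : t < xx l j + 7 * ww l j / 8 := by
          by_contra h
          exact hjK (Finset.mem_filter.mpr ⟨hj, le_of_not_gt h⟩)
        have hjt2 : t ≤ xx l j + ww l j / 8 := by
          rcases le_or_gt t (xx l j + ww l j / 8) with h | h
          · exact h
          · exact absurd (hcase j hj2 h) (not_le_of_gt hjt)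
        have hopen : t ∈ {s : ℝ | s < aa l j} := by
          simp only [mem_setOf_eq, aa]
          linarith [hww j hj2]
        filter_upwards [IsOpen.mem_nhds (isOpen_lt continuous_id continuous_const) hopen]
          with s hs
        rw [if_neg hjk]
        exact th_eq_zero (hww j hj2) (le_of_lt hs)
    filter_upwards [hloc] with s hs
    rw [Lfun]
    have hsum : ∑ j ∈ Finset.range (l.length - 1), (RR l f (j+1) s - RR l f j s) * th l j s
        = ∑ j ∈ Finset.range k, (RR l f (j+1) s - RR l f j s) := by
      rw [← Finset.sum_subset (Finset.range_subset_range.mpr hkle)]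
      · apply Finset.sum_congr rfl
        intro j hj
        have hjk : j < k := Finset.mem_range.mp hj
        rw [hs j (Finset.mem_range.mpr (by omega)), if_pos hjk, mul_one]
      · intro j hj hnj
        rw [hs j hj, if_neg (by simpa using hnj), mul_zero]
    rw [hsum, Finset.sum_range_sub (fun j => RR l f j s)]
    ring

/-! ### Single-window local model and its derivatives -/

def Gg (l : List ℝ) (f : ℝ → ℝ) (i : ℕ) (t : ℝ) : ℝ :=
  RR l f i t + (RR l f (i+1) t - RR l f i t) * th l i t
def Gg1 (l : List ℝ) (f : ℝ → ℝ) (i : ℕ) (t : ℝ) : ℝ :=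
  RR1 l f i t + ((RR1 l f (i+1) t - RR1 l f i t) * th l i t
    + (RR l f (i+1) t - RR l f i t) * th1 l i t)
def Gg2 (l : List ℝ) (f : ℝ → ℝ) (i : ℕ) (t : ℝ) : ℝ :=
  RR2 l f i t + (((RR2 l f (i+1) t - RR2 l f i t) * th l i t
    + (RR1 l f (i+1) t - RR1 l f i t) * th1 l i t)
    + ((RR1 l f (i+1) t - RR1 l f i t) * th1 l i t
      + (RR l f (i+1) t - RR l f i t) * th2 l i t))

lemma hasDerivAt_Gg (l : List ℝ) (f : ℝ → ℝ) (i : ℕ) (t : ℝ) :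
    HasDerivAt (Gg l f i) (Gg1 l f i t) t :=
  (hasDerivAt_RR l f i t).add
    (((hasDerivAt_RR l f (i+1) t).sub (hasDerivAt_RR l f i t)).mul (hasDerivAt_th l i t))

lemma hasDerivAt_Gg1 (l : List ℝ) (f : ℝ → ℝ) (i : ℕ) (t : ℝ) :
    HasDerivAt (Gg1 l f i) (Gg2 l f i t) t :=
  (hasDerivAt_RR1 l f i t).add
    ((((hasDerivAt_RR1 l f (i+1) t).sub (hasDerivAt_RR1 l f i t)).mul (hasDerivAt_th l i t)).add
      (((hasDerivAt_RR l f (i+1) t).sub (hasDerivAt_RR l f i t)).mul (hasDerivAt_th1 l i t)))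

lemma iteratedDeriv_Gg_one (l : List ℝ) (f : ℝ → ℝ) (i : ℕ) :
    iteratedDeriv 1 (Gg l f i) = Gg1 l f i := by
  rw [iteratedDeriv_one]; exact funext fun t => (hasDerivAt_Gg l f i t).deriv
lemma iteratedDeriv_Gg_two (l : List ℝ) (f : ℝ → ℝ) (i : ℕ) :
    iteratedDeriv 2 (Gg l f i) = Gg2 l f i := by
  rw [show (2:ℕ) = 1 + 1 from rfl, iteratedDeriv_succ, iteratedDeriv_Gg_one]
  exact funext fun t => (hasDerivAt_Gg1 l f i t).deriv

lemma iteratedDeriv_RR_one (l : List ℝ) (f : ℝ → ℝ) (i : ℕ) :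
    iteratedDeriv 1 (RR l f i) = RR1 l f i := by
  rw [iteratedDeriv_one]; exact funext fun t => (hasDerivAt_RR l f i t).deriv
lemma iteratedDeriv_RR_two (l : List ℝ) (f : ℝ → ℝ) (i : ℕ) :
    iteratedDeriv 2 (RR l f i) = RR2 l f i := by
  rw [show (2:ℕ) = 1 + 1 from rfl, iteratedDeriv_succ, iteratedDeriv_RR_one]
  exact funext fun t => (hasDerivAt_RR1 l f i t).deriv

lemma iteratedDeriv_congr {u v : ℝ → ℝ} {t : ℝ} (h : u =ᶠ[nhds t] v) {m : ℕ} (hm : m < 3) :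
    iteratedDeriv m u t = iteratedDeriv m v t := by
  interval_cases m
  · simpa [iteratedDeriv_zero] using h.eq_of_nhds
  · simp only [iteratedDeriv_one]; exact h.deriv_eq
  · simp only [show (2:ℕ) = 1 + 1 from rfl, iteratedDeriv_succ, iteratedDeriv_one]
    exact h.deriv.deriv_eq

/-! ### Calculus estimates on an admissible extension -/

section Est
variable {F f : ℝ → ℝ} {M : ℝ}

lemma lip_deriv (hFd : ContDiff ℝ 2 F) (h2 : ∀ s, |deriv (deriv F) s| ≤ M) (a b : ℝ) :
    |deriv F b - deriv F a| ≤ M * |b - a| := by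
  have hdF : Differentiable ℝ (deriv F) := by
    have h := (contDiff_succ_iff_deriv (n := 1)).mp (by exact_mod_cast hFd)
    exact h.2.2.differentiable one_ne_zero
  have h := Convex.norm_image_sub_le_of_norm_deriv_le (f := deriv F) (s := univ)
    (fun x _ => (hdF x)) (fun x _ => by rw [Real.norm_eq_abs]; exact h2 x)
    convex_univ (mem_univ a) (mem_univ b)
  simpa [Real.norm_eq_abs] using h

lemma abs_sub_le_of_uIcc {a b x : ℝ} (hx : x ∈ uIcc a b) : |x - a| ≤ |b - a| := by
  rcases Set.mem_uIcc.mp hx with ⟨h, h'⟩ | ⟨h, h'⟩ <;>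
  · rw [abs_le]
    have h1 := le_abs_self (b - a)
    have h2 := neg_abs_le (b - a)
    constructor <;> linarith

lemma taylor_est (hFd : ContDiff ℝ 2 F) (h2 : ∀ s, |deriv (deriv F) s| ≤ M) (a b : ℝ) :
    |F b - F a - deriv F a * (b - a)| ≤ M * |b - a| * |b - a| := by
  have hM : 0 ≤ M := le_trans (abs_nonneg _) (h2 0)
  have hdFb : Differentiable ℝ F := hFd.differentiable (by norm_num)
  set G := fun s => F s - deriv F a * s with hG
  have hGd : ∀ x, DifferentiableAt ℝ G x := fun x =>
    (hdFb x).sub ((differentiableAt_id.const_mul _))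
  have hGderiv : ∀ x, deriv G x = deriv F x - deriv F a := by
    intro x
    have h := ((hdFb x).hasDerivAt.sub ((hasDerivAt_id x).const_mul (deriv F a)))
    exact h.deriv.trans (by ring)
  have h := Convex.norm_image_sub_le_of_norm_deriv_le (f := G) (s := uIcc a b)
    (C := M * |b - a|) (fun x _ => hGd x)
    (fun x hx => by
      rw [Real.norm_eq_abs, hGderiv x]
      exact le_trans (lip_deriv hFd h2 a x)
        (mul_le_mul_of_nonneg_left (abs_sub_le_of_uIcc hx) hM))
    (convex_uIcc a b) left_mem_uIcc right_mem_uIcc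
  rw [Real.norm_eq_abs, Real.norm_eq_abs] at h
  have hd : G b - G a = F b - F a - deriv F a * (b - a) := by rw [hG]; ring
  rw [← hd]
  exact h

lemma slope_est (hFd : ContDiff ℝ 2 F) (h1 : ∀ s, |deriv F s| ≤ M)
    (h2 : ∀ s, |deriv (deriv F) s| ≤ M) {a b : ℝ} (hab : a < b) :
    |(F b - F a) * (b - a)⁻¹| ≤ M ∧
    |(F b - F a) * (b - a)⁻¹ - deriv F a| ≤ M * |b - a| ∧
    |(F b - F a) * (b - a)⁻¹ - deriv F b| ≤ M * |b - a| := by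
  obtain ⟨c, hc, hceq⟩ := exists_hasDerivAt_eq_slope F (deriv F) hab
    (hFd.continuous.continuousOn)
    (fun x _ => ((hFd.differentiable (by norm_num)) x).hasDerivAt)
  have hrw : (F b - F a) * (b - a)⁻¹ = deriv F c := by rw [hceq, div_eq_mul_inv]
  have hca : |c - a| ≤ |b - a| := by
    rw [abs_of_nonneg (by linarith [hc.1] : (0:ℝ) ≤ c - a),
      abs_of_nonneg (by linarith : (0:ℝ) ≤ b - a)]
    linarith [hc.2]
  have hcb : |c - b| ≤ |b - a| := by
    rw [abs_of_nonpos (by linarith [hc.2] : c - b ≤ 0),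
      abs_of_nonneg (by linarith : (0:ℝ) ≤ b - a)]
    linarith [hc.1]
  have hM : 0 ≤ M := le_trans (abs_nonneg _) (h2 0)
  refine ⟨hrw ▸ h1 c, ?_, ?_⟩
  · rw [hrw]
    exact le_trans (lip_deriv hFd h2 a c) (mul_le_mul_of_nonneg_left hca hM)
  · rw [hrw]
    exact le_trans (lip_deriv hFd h2 b c) (mul_le_mul_of_nonneg_left hcb hM)

lemma dd_abs_le {l : List ℝ} (hl : l.Pairwise (· < ·)) (hfl : ∀ y ∈ l, F y = f y)
    (hFd : ContDiff ℝ 2 F) (h1 : ∀ s, |deriv F s| ≤ M)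
    (h2 : ∀ s, |deriv (deriv F) s| ≤ M) {i : ℕ} (hi : i < l.length) :
    |dd l f i| ≤ M := by
  have hM : 0 ≤ M := le_trans (abs_nonneg _) (h2 0)
  by_cases hn2 : 2 ≤ l.length
  · have hne := nbr_ne hl hn2 hi
    have hfa : F (xx l i) = f (xx l i) := hfl _ (xx_mem hi)
    have hfb : F (nbr l i) = f (nbr l i) := hfl _ (nbr_mem (by omega) hi)
    rcases hne.lt_or_gt with hba | hab
    · have h := (slope_est hFd h1 h2 hba).1
      rw [dd, ← hfa, ← hfb]
      calc |(F (nbr l i) - F (xx l i)) * (nbr l i - xx l i)⁻¹|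
          = |(F (xx l i) - F (nbr l i)) * (xx l i - nbr l i)⁻¹| := by
            rw [show F (nbr l i) - F (xx l i) = -(F (xx l i) - F (nbr l i)) by ring,
              show nbr l i - xx l i = -(xx l i - nbr l i) by ring, inv_neg, neg_mul_neg]
        _ ≤ M := h
    · have h := (slope_est hFd h1 h2 hab).1
      rw [dd, ← hfa, ← hfb]
      exact h
  · have : nbr l i = xx l i := by rw [nbr, if_pos (by omega)]; congr 1; omega
    rw [dd, this, sub_self, zero_mul]
    simpa using hM

lemma dd_close {l : List ℝ} (hl : l.Pairwise (· < ·)) (hfl : ∀ y ∈ l, F y = f y)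
    (hFd : ContDiff ℝ 2 F) (h1 : ∀ s, |deriv F s| ≤ M)
    (h2 : ∀ s, |deriv (deriv F) s| ≤ M) {i : ℕ} (hn2 : 2 ≤ l.length) (hi : i < l.length) :
    |dd l f i - deriv F (xx l i)| ≤ M * |nbr l i - xx l i| := by
  have hne := nbr_ne hl hn2 hi
  have hfa : F (xx l i) = f (xx l i) := hfl _ (xx_mem hi)
  have hfb : F (nbr l i) = f (nbr l i) := hfl _ (nbr_mem (by omega) hi)
  rcases hne.lt_or_gt with hba | hab
  · have h := (slope_est hFd h1 h2 hba).2.2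
    rw [dd, ← hfa, ← hfb]
    calc |(F (nbr l i) - F (xx l i)) * (nbr l i - xx l i)⁻¹ - deriv F (xx l i)|
        = |(F (xx l i) - F (nbr l i)) * (xx l i - nbr l i)⁻¹ - deriv F (xx l i)| := by
          rw [show F (nbr l i) - F (xx l i) = -(F (xx l i) - F (nbr l i)) by ring,
            show nbr l i - xx l i = -(xx l i - nbr l i) by ring, inv_neg, neg_mul_neg]
      _ ≤ M * |xx l i - nbr l i| := h
      _ = M * |nbr l i - xx l i| := by rw [abs_sub_comm]
  · have h := (slope_est hFd h1 h2 hab).2.1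
    rw [dd, ← hfa, ← hfb]
    calc |(F (nbr l i) - F (xx l i)) * (nbr l i - xx l i)⁻¹ - deriv F (xx l i)|
        ≤ M * |nbr l i - xx l i| := h

lemma dd_diff {l : List ℝ} (hl : l.Pairwise (· < ·)) (hfl : ∀ y ∈ l, F y = f y)
    (hFd : ContDiff ℝ 2 F) (h1 : ∀ s, |deriv F s| ≤ M)
    (h2 : ∀ s, |deriv (deriv F) s| ≤ M) {i : ℕ} (hi : i + 1 < l.length) :
    |dd l f (i+1) - dd l f i| ≤ 3 * M * ww l i := by
  have hM : 0 ≤ M := le_trans (abs_nonneg _) (h2 0)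
  have hn2 : 2 ≤ l.length := by omega
  have hw : 0 < ww l i := by rw [ww]; linarith [xx_lt_xx hl (Nat.lt_succ_self i) hi]
  have ha := dd_close hl hfl hFd h1 h2 hn2 (by omega : i < l.length)
  have hb := dd_close hl hfl hFd h1 h2 hn2 hi
  have hna := nbr_le_right hl hn2 hi
  have hnb : |nbr l (i+1) - xx l (i+1)| ≤ ww l i := by
    have := nbr_le_left hl hn2 hi (by omega)
    simpa [ww] using this
  have hlip := lip_deriv hFd h2 (xx l i) (xx l (i+1))
  have hw' := hw
  rw [ww] at hw'
  have hxx : |xx l (i+1) - xx l i| = ww l i := by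
    rw [abs_of_nonneg (by linarith), ww]
  rw [hxx] at hlip
  have e1 : |dd l f i - deriv F (xx l i)| ≤ M * ww l i :=
    le_trans ha (mul_le_mul_of_nonneg_left (le_trans hna (by rw [ww])) hM)
  have e2 : |dd l f (i+1) - deriv F (xx l (i+1))| ≤ M * ww l i :=
    le_trans hb (mul_le_mul_of_nonneg_left hnb hM)
  have := abs_sub_abs_le_abs_sub (dd l f (i+1)) (dd l f i)
  calc |dd l f (i+1) - dd l f i|
      = |(dd l f (i+1) - deriv F (xx l (i+1))) + (deriv F (xx l (i+1)) - deriv F (xx l i))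
          + (deriv F (xx l i) - dd l f i)| := by ring_nf
    _ ≤ |(dd l f (i+1) - deriv F (xx l (i+1))) + (deriv F (xx l (i+1)) - deriv F (xx l i))|
          + |deriv F (xx l i) - dd l f i| := abs_add_le _ _
    _ ≤ |dd l f (i+1) - deriv F (xx l (i+1))| + |deriv F (xx l (i+1)) - deriv F (xx l i)|
          + |deriv F (xx l i) - dd l f i| := by linarith [abs_add_le (dd l f (i+1) - deriv F (xx l (i+1))) (deriv F (xx l (i+1)) - deriv F (xx l i))]
    _ ≤ 3 * M * ww l i := by
        rw [abs_sub_comm (deriv F (xx l i)) (dd l f i)]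
        linarith

lemma RR_close {l : List ℝ} (hl : l.Pairwise (· < ·)) (hfl : ∀ y ∈ l, F y = f y)
    (hFd : ContDiff ℝ 2 F) (h0 : ∀ s, |F s| ≤ M) (h1 : ∀ s, |deriv F s| ≤ M)
    (h2 : ∀ s, |deriv (deriv F) s| ≤ M) {i j : ℕ} (hi : i + 1 < l.length)
    (hj : j = i ∨ j = i + 1) {t : ℝ} (hw1 : ww l i ≤ 1)
    (ht1 : xx l i ≤ t) (ht2 : t ≤ xx l (i+1)) :
    RR l f j t = f (xx l j) + dd l f j * (t - xx l j) ∧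
    |RR l f j t - F t| ≤ 2 * M * (ww l i)^2 := by
  have hM : 0 ≤ M := le_trans (abs_nonneg _) (h2 0)
  have hn2 : 2 ≤ l.length := by omega
  have hw : 0 < ww l i := by rw [ww]; linarith [xx_lt_xx hl (Nat.lt_succ_self i) hi]
  have hdist : |t - xx l j| ≤ ww l i := by
    rcases hj with h | h <;> subst h
    · rw [abs_of_nonneg (by linarith)]
      rw [ww]; linarith
    · rw [abs_of_nonpos (by linarith)]
      rw [ww]; linarith
  have hflat : flat (t - xx l j) = t - xx l j :=
    flat_eq_id (by cases abs_le.mp (le_trans hdist hw1) with | intro a b => linarith)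
      (by cases abs_le.mp (le_trans hdist hw1) with | intro a b => linarith)
  have heq : RR l f j t = f (xx l j) + dd l f j * (t - xx l j) := by rw [RR, hflat]
  refine ⟨heq, ?_⟩
  have hjl : j < l.length := by omega
  have hfj : f (xx l j) = F (xx l j) := (hfl _ (xx_mem hjl)).symm
  have htay := taylor_est hFd h2 (xx l j) t
  have hddc := dd_close hl hfl hFd h1 h2 hn2 hjl
  have hnbr : |nbr l j - xx l j| ≤ ww l i := by
    rcases hj with h | h <;> subst h
    · exact le_trans (nbr_le_right hl hn2 hi) (by rw [ww])
    · have := nbr_le_left hl hn2 hi (by omega)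
      simpa [ww] using this
  have e1 : |dd l f j - deriv F (xx l j)| ≤ M * ww l i :=
    le_trans hddc (mul_le_mul_of_nonneg_left hnbr hM)
  calc |RR l f j t - F t|
      = |(F (xx l j) + deriv F (xx l j) * (t - xx l j) - F t)
          + (dd l f j - deriv F (xx l j)) * (t - xx l j)| := by rw [heq, hfj]; ring_nf
    _ ≤ |F (xx l j) + deriv F (xx l j) * (t - xx l j) - F t|
          + |(dd l f j - deriv F (xx l j))| * |t - xx l j| := by
        rw [← abs_mul]; exact abs_add_le _ _
    _ ≤ M * |t - xx l j| * |t - xx l j| + (M * ww l i) * (ww l i) := by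
        have h3 : |F (xx l j) + deriv F (xx l j) * (t - xx l j) - F t|
            = |F t - F (xx l j) - deriv F (xx l j) * (t - xx l j)| := by
          rw [abs_sub_comm]; ring_nf
        rw [h3]
        have h4 : |(dd l f j - deriv F (xx l j))| * |t - xx l j| ≤ (M * ww l i) * ww l i :=
          mul_le_mul e1 hdist (abs_nonneg _) (by positivity)
        linarith [htay]
    _ ≤ 2 * M * (ww l i)^2 := by
        have h5 : M * |t - xx l j| * |t - xx l j| ≤ M * ww l i * ww l i := by
          apply mul_le_mul (mul_le_mul_of_nonneg_left hdist hM) hdist (abs_nonneg _)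
          positivity
        nlinarith

end Est

section Main
variable {F f : ℝ → ℝ} {M : ℝ}

lemma main_est {l : List ℝ} (hl : l.Pairwise (· < ·)) (hn : 1 ≤ l.length)
    (hfl : ∀ y ∈ l, F y = f y) (hFd : ContDiff ℝ 2 F)
    (h0 : ∀ s, |F s| ≤ M) (h1 : ∀ s, |deriv F s| ≤ M)
    (h2 : ∀ s, |deriv (deriv F) s| ≤ M) (t : ℝ) {m : ℕ} (hm : m < 3) :
    |iteratedDeriv m (Lfun l f) t| ≤ 1000000 * M := by
  have hM : 0 ≤ M := le_trans (abs_nonneg _) (h2 0)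
  rcases collapse hl hn t with ⟨k, hk, hev⟩ | ⟨i, hi, ht1, ht2, hev⟩
  · -- away from all transition windows
    rw [iteratedDeriv_congr (hev f) hm]
    have hdk := dd_abs_le hl hfl hFd h1 h2 hk
    have hfk : |f (xx l k)| ≤ M := by rw [← hfl _ (xx_mem hk)]; exact h0 _
    interval_cases m
    · rw [iteratedDeriv_zero, RR]
      have hb := abs_flat_le (t - xx l k)
      calc |f (xx l k) + dd l f k * flat (t - xx l k)|
          ≤ |f (xx l k)| + |dd l f k| * |flat (t - xx l k)| := by
            rw [← abs_mul]; exact abs_add_le _ _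
        _ ≤ M + M * 30 := by
            have := mul_le_mul hdk hb (abs_nonneg _) hM
            linarith
        _ ≤ 1000000 * M := by linarith
    · rw [iteratedDeriv_RR_one, RR1]
      have hb := abs_flat1_le (t - xx l k)
      rw [abs_mul]
      calc |dd l f k| * |flat1 (t - xx l k)| ≤ M * 72 :=
            mul_le_mul hdk hb (abs_nonneg _) hM
        _ ≤ 1000000 * M := by linarith
    · rw [iteratedDeriv_RR_two, RR2]
      have hb := abs_flat2_le (t - xx l k)
      rw [abs_mul]
      calc |dd l f k| * |flat2 (t - xx l k)| ≤ M * 216 :=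
            mul_le_mul hdk hb (abs_nonneg _) hM
        _ ≤ 1000000 * M := by linarith
  · -- inside (the closure of) a transition window
    have hev' : Lfun l f =ᶠ[nhds t] Gg l f i := hev f
    rw [iteratedDeriv_congr hev' hm]
    have hn2 : 2 ≤ l.length := by omega
    have hw : 0 < ww l i := by rw [ww]; linarith [xx_lt_xx hl (Nat.lt_succ_self i) hi]
    have hwdef : xx l (i+1) = xx l i + ww l i := by rw [ww]; ring
    have hxi : xx l i ≤ t := by linarith
    have hxi1 : t ≤ xx l (i+1) := by rw [hwdef]; linarith
    have hmm : |mm l i| = 2 / ww l i := by rw [mm, abs_of_nonneg (by positivity)]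
    have hdd1 := dd_abs_le hl hfl hFd h1 h2 (by omega : i < l.length)
    have hdd2 := dd_abs_le hl hfl hFd h1 h2 (by omega : i + 1 < l.length)
    have hfk1 : |f (xx l i)| ≤ M := by
      rw [← hfl _ (xx_mem (by omega : i < l.length))]; exact h0 _
    have hfk2 : |f (xx l (i+1))| ≤ M := by
      rw [← hfl _ (xx_mem (by omega : i + 1 < l.length))]; exact h0 _
    -- global bounds at the point t
    have bR : ∀ j, j < l.length → |RR l f j t| ≤ 31 * M := by
      intro j hj
      have hdd := dd_abs_le hl hfl hFd h1 h2 hj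
      have hf : |f (xx l j)| ≤ M := by rw [← hfl _ (xx_mem hj)]; exact h0 _
      rw [RR]
      calc |f (xx l j) + dd l f j * flat (t - xx l j)|
          ≤ |f (xx l j)| + |dd l f j| * |flat (t - xx l j)| := by
            rw [← abs_mul]; exact abs_add_le _ _
        _ ≤ 31 * M := by
            have := mul_le_mul hdd (abs_flat_le (t - xx l j)) (abs_nonneg _) hM
            linarith
    have bR1 : ∀ j, j < l.length → |RR1 l f j t| ≤ 72 * M := by
      intro j hj
      have hdd := dd_abs_le hl hfl hFd h1 h2 hj
      rw [RR1, abs_mul]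
      have := mul_le_mul hdd (abs_flat1_le (t - xx l j)) (abs_nonneg _) hM
      linarith
    have bR2 : ∀ j, j < l.length → |RR2 l f j t| ≤ 216 * M := by
      intro j hj
      have hdd := dd_abs_le hl hfl hFd h1 h2 hj
      rw [RR2, abs_mul]
      have := mul_le_mul hdd (abs_flat2_le (t - xx l j)) (abs_nonneg _) hM
      linarith
    have bth : |th l i t| ≤ 36 := abs_stepF_le _
    have bth1 : |th1 l i t| ≤ 108 * (2 / ww l i) := by
      rw [th1, abs_mul, hmm]
      exact mul_le_mul_of_nonneg_right (abs_stepF1_le _) (by positivity)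
    have bth2 : |th2 l i t| ≤ 216 * (2 / ww l i)^2 := by
      rw [th2, abs_mul, abs_pow, hmm]
      exact mul_le_mul_of_nonneg_right (abs_stepF2_le _) (by positivity)
    have bRd : |RR l f (i+1) t - RR l f i t| ≤ 62 * M := by
      have := abs_sub (RR l f (i+1) t) (RR l f i t)
      have b1 := bR i (by omega); have b2 := bR (i+1) (by omega)
      calc |RR l f (i+1) t - RR l f i t| ≤ |RR l f (i+1) t| + |RR l f i t| := abs_sub _ _
        _ ≤ 62 * M := by linarith
    have bR1d : |RR1 l f (i+1) t - RR1 l f i t| ≤ 144 * M := by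
      have b1 := bR1 i (by omega); have b2 := bR1 (i+1) (by omega)
      calc |RR1 l f (i+1) t - RR1 l f i t| ≤ |RR1 l f (i+1) t| + |RR1 l f i t| := abs_sub _ _
        _ ≤ 144 * M := by linarith
    have bR2d : |RR2 l f (i+1) t - RR2 l f i t| ≤ 432 * M := by
      have b1 := bR2 i (by omega); have b2 := bR2 (i+1) (by omega)
      calc |RR2 l f (i+1) t - RR2 l f i t| ≤ |RR2 l f (i+1) t| + |RR2 l f i t| := abs_sub _ _
        _ ≤ 432 * M := by linarith
    interval_cases m
    · -- zeroth derivative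
      rw [iteratedDeriv_zero]
      have hsplit : |Gg l f i t| ≤ |RR l f i t|
          + |RR l f (i+1) t - RR l f i t| * |th l i t| := by
        rw [Gg, ← abs_mul]; exact abs_add_le _ _
      have hprod := mul_le_mul bRd bth (abs_nonneg _) (by linarith)
      have := bR i (by omega)
      linarith
    · -- first derivative
      rw [iteratedDeriv_Gg_one]
      have hsplit : |Gg1 l f i t| ≤ |RR1 l f i t|
          + (|RR1 l f (i+1) t - RR1 l f i t| * |th l i t|
            + |RR l f (i+1) t - RR l f i t| * |th1 l i t|) := by
        rw [Gg1]
        refine le_trans (abs_add_le _ _) ?_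
        gcongr
        refine le_trans (abs_add_le _ _) ?_
        rw [abs_mul, abs_mul]
      have hp1 := mul_le_mul bR1d bth (abs_nonneg _) (by linarith)
      have hb1 := bR1 i (by omega)
      rcases le_or_gt 1 (ww l i) with hw1 | hw1
      · -- wide window: crude bounds
        have hth1' : |th1 l i t| ≤ 216 := by
          have : (2:ℝ) / ww l i ≤ 2 := by
            rw [div_le_iff₀ hw]; nlinarith
          nlinarith [abs_nonneg (th1 l i t)]
        have hp2 := mul_le_mul bRd hth1' (abs_nonneg _) (by linarith)
        linarith
      · -- narrow window: refined bounds
        have hc := RR_close (t := t) hl hfl hFd h0 h1 h2 hi (Or.inl rfl) hw1.le hxi hxi1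
        have hc2 := RR_close (t := t) hl hfl hFd h0 h1 h2 hi (Or.inr rfl) hw1.le hxi hxi1
        have hRd : |RR l f (i+1) t - RR l f i t| ≤ 4 * M * (ww l i)^2 := by
          calc |RR l f (i+1) t - RR l f i t|
              = |(RR l f (i+1) t - F t) - (RR l f i t - F t)| := by ring_nf
            _ ≤ |RR l f (i+1) t - F t| + |RR l f i t - F t| := abs_sub _ _
            _ ≤ 4 * M * (ww l i)^2 := by linarith [hc.2, hc2.2]
        have hp2 : |RR l f (i+1) t - RR l f i t| * |th1 l i t|
            ≤ 4 * M * (ww l i)^2 * (108 * (2 / ww l i)) :=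
          mul_le_mul hRd bth1 (abs_nonneg _) (by positivity)
        have hid : 4 * M * (ww l i)^2 * (108 * (2 / ww l i)) = 864 * M * ww l i := by
          field_simp; ring
        rw [hid] at hp2
        have : 864 * M * ww l i ≤ 864 * M := by nlinarith
        linarith
    · -- second derivative
      rw [iteratedDeriv_Gg_two]
      have hsplit : |Gg2 l f i t| ≤ |RR2 l f i t|
          + ((|RR2 l f (i+1) t - RR2 l f i t| * |th l i t|
              + |RR1 l f (i+1) t - RR1 l f i t| * |th1 l i t|)
            + (|RR1 l f (i+1) t - RR1 l f i t| * |th1 l i t|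
              + |RR l f (i+1) t - RR l f i t| * |th2 l i t|)) := by
        rw [Gg2]
        refine le_trans (abs_add_le _ _) ?_
        gcongr
        refine le_trans (abs_add_le _ _) ?_
        gcongr
        · refine le_trans (abs_add_le _ _) ?_
          rw [abs_mul, abs_mul]
        · refine le_trans (abs_add_le _ _) ?_
          rw [abs_mul, abs_mul]
      have hp1 := mul_le_mul bR2d bth (abs_nonneg _) (by linarith)
      have hb2 := bR2 i (by omega)
      rcases le_or_gt 1 (ww l i) with hw1 | hw1
      · -- wide window: crude bounds
        have hq : (2:ℝ) / ww l i ≤ 2 := by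
          rw [div_le_iff₀ hw]; nlinarith
        have hq0 : (0:ℝ) ≤ 2 / ww l i := by positivity
        have hth1' : |th1 l i t| ≤ 216 := by nlinarith [abs_nonneg (th1 l i t)]
        have hth2' : |th2 l i t| ≤ 864 := by nlinarith [abs_nonneg (th2 l i t)]
        have hp2 := mul_le_mul bR1d hth1' (abs_nonneg _) (by linarith)
        have hp3 := mul_le_mul bRd hth2' (abs_nonneg _) (by linarith)
        linarith
      · -- narrow window: refined bounds
        have hc := RR_close (t := t) hl hfl hFd h0 h1 h2 hi (Or.inl rfl) hw1.le hxi hxi1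
        have hc2 := RR_close (t := t) hl hfl hFd h0 h1 h2 hi (Or.inr rfl) hw1.le hxi hxi1
        -- the second derivatives of the local pieces vanish
        have hfl2a : RR2 l f i t = 0 := by
          rw [RR2, flat2_eq_zero (by linarith) (by linarith), mul_zero]
        have hfl2b : RR2 l f (i+1) t = 0 := by
          rw [RR2, flat2_eq_zero (by rw [hwdef] at hxi1 ⊢; linarith)
            (by rw [hwdef] at hxi1 ⊢; linarith), mul_zero]
        -- refined difference bounds
        have hRd : |RR l f (i+1) t - RR l f i t| ≤ 4 * M * (ww l i)^2 := by
          calc |RR l f (i+1) t - RR l f i t|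
              = |(RR l f (i+1) t - F t) - (RR l f i t - F t)| := by ring_nf
            _ ≤ |RR l f (i+1) t - F t| + |RR l f i t - F t| := abs_sub _ _
            _ ≤ 4 * M * (ww l i)^2 := by linarith [hc.2, hc2.2]
        have hfl1a : flat1 (t - xx l i) = 1 :=
          flat1_eq_one (by linarith) (by linarith)
        have hfl1b : flat1 (t - xx l (i+1)) = 1 :=
          flat1_eq_one (by rw [hwdef] at hxi1 ⊢; linarith) (by rw [hwdef] at hxi1 ⊢; linarith)
        have hR1d : |RR1 l f (i+1) t - RR1 l f i t| ≤ 3 * M * ww l i := by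
          rw [RR1, RR1, hfl1a, hfl1b, mul_one, mul_one]
          exact dd_diff hl hfl hFd h1 h2 hi
        have hp2 : |RR1 l f (i+1) t - RR1 l f i t| * |th1 l i t|
            ≤ 3 * M * ww l i * (108 * (2 / ww l i)) :=
          mul_le_mul hR1d bth1 (abs_nonneg _) (by positivity)
        have hid2 : 3 * M * ww l i * (108 * (2 / ww l i)) = 648 * M := by
          field_simp; ring
        rw [hid2] at hp2
        have hp3 : |RR l f (i+1) t - RR l f i t| * |th2 l i t|
            ≤ 4 * M * (ww l i)^2 * (216 * (2 / ww l i)^2) :=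
          mul_le_mul hRd bth2 (abs_nonneg _) (by positivity)
        have hid3 : 4 * M * (ww l i)^2 * (216 * (2 / ww l i)^2) = 3456 * M := by
          field_simp; ring
        rw [hid3] at hp3
        have e0 : |RR2 l f i t| = 0 := by rw [hfl2a, abs_zero]
        have e1 : |RR2 l f (i+1) t - RR2 l f i t| * |th l i t| = 0 := by
          rw [hfl2a, hfl2b, sub_zero, abs_zero, zero_mul]
        linarith

end Main

/-! ### Crude global bound for `Lfun` -/

def AA (l : List ℝ) (f : ℝ → ℝ) (j : ℕ) : ℝ := |f (xx l j)| + 300 * |dd l f j|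

def crude (l : List ℝ) (f : ℝ → ℝ) : ℝ :=
  AA l f 0 + ∑ i ∈ Finset.range (l.length - 1),
    (AA l f (i+1) + AA l f i) * (40 + 300 * |mm l i| + 1000 * (mm l i)^2)

lemma AA_nonneg (l : List ℝ) (f : ℝ → ℝ) (j : ℕ) : 0 ≤ AA l f j :=
  add_nonneg (abs_nonneg _) (by positivity)

lemma crude_nonneg (l : List ℝ) (f : ℝ → ℝ) : 0 ≤ crude l f := by
  refine add_nonneg (AA_nonneg l f 0) (Finset.sum_nonneg fun i _ => ?_)
  have h1 := AA_nonneg l f (i+1)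
  have h2 := AA_nonneg l f i
  have h3 : (0:ℝ) ≤ 40 + 300 * |mm l i| + 1000 * (mm l i)^2 := by positivity
  nlinarith

lemma RR_le_AA (l : List ℝ) (f : ℝ → ℝ) (j : ℕ) (t : ℝ) :
    |RR l f j t| ≤ AA l f j ∧ |RR1 l f j t| ≤ AA l f j ∧ |RR2 l f j t| ≤ AA l f j := by
  have hd := abs_nonneg (dd l f j)
  refine ⟨?_, ?_, ?_⟩
  · rw [RR, AA]
    have h := abs_flat_le (t - xx l j)
    have h2 := mul_le_mul_of_nonneg_left h hd
    calc |f (xx l j) + dd l f j * flat (t - xx l j)|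
        ≤ |f (xx l j)| + |dd l f j| * |flat (t - xx l j)| := by
          rw [← abs_mul]; exact abs_add_le _ _
      _ ≤ |f (xx l j)| + 300 * |dd l f j| := by nlinarith
  · rw [RR1, AA, abs_mul]
    have h := abs_flat1_le (t - xx l j)
    nlinarith [abs_nonneg (f (xx l j)), mul_le_mul_of_nonneg_left h hd]
  · rw [RR2, AA, abs_mul]
    have h := abs_flat2_le (t - xx l j)
    nlinarith [abs_nonneg (f (xx l j)), mul_le_mul_of_nonneg_left h hd]

lemma th_crude (l : List ℝ) (i : ℕ) (t : ℝ) :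
    |th l i t| ≤ 36 ∧ |th1 l i t| ≤ 108 * |mm l i| ∧ |th2 l i t| ≤ 216 * (mm l i)^2 := by
  refine ⟨abs_stepF_le _, ?_, ?_⟩
  · rw [th1, abs_mul]
    exact mul_le_mul_of_nonneg_right (abs_stepF1_le _) (abs_nonneg _)
  · rw [th2, abs_mul, abs_pow, sq_abs]
    exact mul_le_mul_of_nonneg_right (abs_stepF2_le _) (sq_nonneg _)

lemma crude_bound (l : List ℝ) (f : ℝ → ℝ) (t : ℝ) {m : ℕ} (hm : m < 3) :
    |iteratedDeriv m (Lfun l f) t| ≤ crude l f := by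
  have hterm : ∀ i : ℕ, ∀ X : ℝ, (X = |(RR l f (i+1) t - RR l f i t) * th l i t| ∨
      X = |((RR1 l f (i+1) t - RR1 l f i t) * th l i t
        + (RR l f (i+1) t - RR l f i t) * th1 l i t)| ∨
      X = |(((RR2 l f (i+1) t - RR2 l f i t) * th l i t
        + (RR1 l f (i+1) t - RR1 l f i t) * th1 l i t)
        + ((RR1 l f (i+1) t - RR1 l f i t) * th1 l i t
        + (RR l f (i+1) t - RR l f i t) * th2 l i t))|) →
      X ≤ (AA l f (i+1) + AA l f i) * (40 + 300 * |mm l i| + 1000 * (mm l i)^2) := by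
    intro i X hX
    obtain ⟨c0, c1, c2⟩ := th_crude l i t
    obtain ⟨a0, a1, a2⟩ := RR_le_AA l f i t
    obtain ⟨b0, b1, b2⟩ := RR_le_AA l f (i+1) t
    have hS : 0 ≤ AA l f (i+1) + AA l f i := by
      linarith [AA_nonneg l f i, AA_nonneg l f (i+1)]
    have d0 : |RR l f (i+1) t - RR l f i t| ≤ AA l f (i+1) + AA l f i :=
      le_trans (abs_sub _ _) (by linarith)
    have d1 : |RR1 l f (i+1) t - RR1 l f i t| ≤ AA l f (i+1) + AA l f i :=
      le_trans (abs_sub _ _) (by linarith)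
    have d2 : |RR2 l f (i+1) t - RR2 l f i t| ≤ AA l f (i+1) + AA l f i :=
      le_trans (abs_sub _ _) (by linarith)
    have e0 := mul_le_mul d0 c0 (abs_nonneg _) hS
    have e1 := mul_le_mul d1 c1 (abs_nonneg _) hS
    have e2 := mul_le_mul d2 c0 (abs_nonneg _) hS
    have e3 := mul_le_mul d0 c2 (abs_nonneg _) hS
    have e4 := mul_le_mul d1 c0 (abs_nonneg _) hS
    have e5 := mul_le_mul d0 c1 (abs_nonneg _) hS
    have hmm0 := abs_nonneg (mm l i)
    have hmm2 := sq_nonneg (mm l i)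
    rcases hX with h | h | h <;> subst h
    · rw [abs_mul]; nlinarith
    · refine le_trans (abs_add_le _ _) ?_
      rw [abs_mul, abs_mul]; nlinarith
    · refine le_trans (le_trans (abs_add_le _ _)
        (add_le_add (abs_add_le _ _) (abs_add_le _ _))) ?_
      simp only [abs_mul]; nlinarith
  interval_cases m
  · rw [iteratedDeriv_zero, Lfun, crude]
    refine le_trans (abs_add_le _ _) (add_le_add (RR_le_AA l f 0 t).1
      (le_trans (Finset.abs_sum_le_sum_abs _ _) (Finset.sum_le_sum fun i _ => ?_)))
    exact hterm i _ (Or.inl rfl)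
  · rw [iteratedDeriv_Lfun_one, Lfun1, crude]
    refine le_trans (abs_add_le _ _) (add_le_add (RR_le_AA l f 0 t).2.1
      (le_trans (Finset.abs_sum_le_sum_abs _ _) (Finset.sum_le_sum fun i _ => ?_)))
    exact hterm i _ (Or.inr (Or.inl rfl))
  · rw [iteratedDeriv_Lfun_two, Lfun2, crude]
    refine le_trans (abs_add_le _ _) (add_le_add (RR_le_AA l f 0 t).2.2
      (le_trans (Finset.abs_sum_le_sum_abs _ _) (Finset.sum_le_sum fun i _ => ?_)))
    exact hterm i _ (Or.inr (Or.inr rfl))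

end C2Ext

open C2Ext Filter

lemma zero_iteratedDeriv (m : ℕ) : iteratedDeriv m (fun _ : ℝ => (0:ℝ)) = fun _ => 0 := by
  induction m with
  | zero => rw [iteratedDeriv_zero]
  | succ n ih =>
      rw [iteratedDeriv_succ, ih]
      funext s
      exact deriv_const s 0

lemma c2sum_le_of_bounds {G : ℝ → ℝ} {t K : ℝ} (hK : 0 ≤ K)
    (h : ∀ m, m < 3 → |iteratedDeriv m G t| ≤ K) : C2sum1 G t ≤ 2 * K := by
  rw [C2sum1]
  have hsum : ∑ m ∈ Finset.range 3, (iteratedDeriv m G t)^2 ≤ (2*K)^2 := by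
    rw [Finset.sum_range_succ, Finset.sum_range_succ, Finset.sum_range_one]
    have h0 := h 0 (by norm_num)
    have h1 := h 1 (by norm_num)
    have h2 := h 2 (by norm_num)
    nlinarith [sq_abs (iteratedDeriv 0 G t), sq_abs (iteratedDeriv 1 G t),
      sq_abs (iteratedDeriv 2 G t), abs_nonneg (iteratedDeriv 0 G t),
      abs_nonneg (iteratedDeriv 1 G t), abs_nonneg (iteratedDeriv 2 G t)]
  calc Real.sqrt (∑ m ∈ Finset.range 3, (iteratedDeriv m G t)^2)
      ≤ Real.sqrt ((2*K)^2) := Real.sqrt_le_sqrt hsum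
    _ = 2*K := Real.sqrt_sq (by linarith)

lemma abs_le_of_c2 {G : ℝ → ℝ} {M : ℝ} (h : ∀ t, C2sum1 G t ≤ M) (t : ℝ) {m : ℕ}
    (hm : m < 3) : |iteratedDeriv m G t| ≤ M := by
  have h1 : |iteratedDeriv m G t| = Real.sqrt ((iteratedDeriv m G t)^2) :=
    (Real.sqrt_sq_eq_abs _).symm
  rw [h1]
  refine le_trans (Real.sqrt_le_sqrt
    (Finset.single_le_sum (fun i _ => sq_nonneg (iteratedDeriv i G t))
      (Finset.mem_range.mpr hm))) (h t)

lemma traceNorm1_nonneg (E : Set ℝ) (f : ℝ → ℝ) : 0 ≤ traceNorm1 E f := by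
  apply Real.sInf_nonneg
  rintro M ⟨F, _, _, hFM⟩
  exact le_trans (Real.sqrt_nonneg _) (hFM 0)

/-- One-dimensional linear `C²` extension operator of bounded depth.
(The operator on `C²(E) ≅ ℝ^E` is modelled as a linear operator on all of `ℝ → ℝ` which
only uses the values of its argument on `E`.) -/
theorem oneDim_linear_extension_bounded_depth :
    ∃ (C : ℝ) (D : ℕ),
      ∀ E : Set ℝ, E.Finite →
        ∃ L : (ℝ → ℝ) →ₗ[ℝ] (ℝ → ℝ),
          (∀ f : ℝ → ℝ,
            ContDiff ℝ 2 (L f) ∧ (∀ t ∈ E, L f t = f t) ∧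
            C2NormLE1 (L f) (C * traceNorm1 E f)) ∧
          (∀ t : ℝ, ∃ S : Set ℝ, S ⊆ E ∧ S.ncard ≤ D ∧
            ∀ f g : ℝ → ℝ, (∀ s ∈ S, f s = g s) →
              ∀ m ≤ 2, iteratedDeriv m (L f) t = iteratedDeriv m (L g) t) := by
  refine ⟨2000000, 4, fun E hE => ?_⟩
  by_cases hempty : E = ∅
  · refine ⟨0, fun f => ⟨?_, ?_, ?_⟩, fun t => ⟨∅, empty_subset _, by simp, ?_⟩⟩
    · show ContDiff ℝ 2 (fun _ : ℝ => (0:ℝ))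
      exact contDiff_const
    · intro t ht; rw [hempty] at ht; exact absurd ht (notMem_empty t)
    · intro t
      show C2sum1 (fun _ : ℝ => (0:ℝ)) t ≤ _
      have hz : C2sum1 (fun _ : ℝ => (0:ℝ)) t ≤ 2 * 0 :=
        c2sum_le_of_bounds le_rfl (fun m _ => by rw [zero_iteratedDeriv m]; simp)
      have := traceNorm1_nonneg E f
      nlinarith
    · intro f g _ m _
      rfl
  · -- nonempty case
    set l : List ℝ := hE.toFinset.sort (· ≤ ·) with hldef
    have hl : l.Pairwise (· < ·) := hE.toFinset.sortedLT_sort.pairwise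
    have hmem : ∀ y, y ∈ l ↔ y ∈ E := by
      intro y
      rw [hldef, Finset.mem_sort, Set.Finite.mem_toFinset]
    have hlen : 1 ≤ l.length := by
      obtain ⟨x, hx⟩ := Set.nonempty_iff_ne_empty.mpr hempty
      have : x ∈ l := (hmem x).mpr hx
      exact List.length_pos_iff.mpr (List.ne_nil_of_mem this)
    refine ⟨{ toFun := Lfun l,
              map_add' := Lfun_add l,
              map_smul' := fun c f => by simpa using Lfun_smul l c f },
      fun f => ⟨contDiff_Lfun l f, ?_, ?_⟩, fun t => ?_⟩
    · -- interpolation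
      intro t ht
      obtain ⟨j, hj, hjt⟩ := List.mem_iff_getElem.mp ((hmem t).mpr ht)
      have hxj : xx l j = t := by rw [xx, List.getD_eq_getElem l 0 hj, hjt]
      show Lfun l f t = f t
      rw [← hxj]
      exact Lfun_interp hl f hj
    · -- norm bound
      intro t
      show C2sum1 (Lfun l f) t ≤ 2000000 * traceNorm1 E f
      set SS := { M | ∃ F : ℝ → ℝ, ContDiff ℝ 2 F ∧ (∀ s ∈ E, F s = f s) ∧ C2NormLE1 F M }
        with hSS
      have hSne : SS.Nonempty := by
        refine ⟨2 * crude l f, Lfun l f, contDiff_Lfun l f, ?_, ?_⟩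
        · intro s hs
          obtain ⟨j, hj, hjt⟩ := List.mem_iff_getElem.mp ((hmem s).mpr hs)
          have hxj : xx l j = s := by rw [xx, List.getD_eq_getElem l 0 hj, hjt]
          rw [← hxj]
          exact Lfun_interp hl f hj
        · intro s
          exact c2sum_le_of_bounds (crude_nonneg l f) (fun m hm => crude_bound l f s hm)
      have key : ∀ M ∈ SS, C2sum1 (Lfun l f) t ≤ 2000000 * M := by
        rintro M ⟨F, hFd, hFE, hFM⟩
        have hM : 0 ≤ M := le_trans (Real.sqrt_nonneg _) (hFM 0)
        have h0 : ∀ s, |F s| ≤ M := fun s => by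
          have := abs_le_of_c2 hFM s (by norm_num : 0 < 3)
          rwa [iteratedDeriv_zero] at this
        have h1 : ∀ s, |deriv F s| ≤ M := fun s => by
          have := abs_le_of_c2 hFM s (by norm_num : 1 < 3)
          rwa [iteratedDeriv_one] at this
        have h2 : ∀ s, |deriv (deriv F) s| ≤ M := fun s => by
          have := abs_le_of_c2 hFM s (by norm_num : 2 < 3)
          rwa [show (2:ℕ) = 1 + 1 from rfl, iteratedDeriv_succ, iteratedDeriv_one] at this
        have hfl : ∀ y ∈ l, F y = f y := fun y hy => hFE y ((hmem y).mp hy)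
        have := c2sum_le_of_bounds (K := 1000000 * M) (by positivity)
          (fun m hm => main_est hl hlen hfl hFd h0 h1 h2 t hm)
        linarith
      have hdiv : C2sum1 (Lfun l f) t / 2000000 ≤ sInf SS := by
        apply le_csInf hSne
        intro M hM
        rw [div_le_iff₀ (by norm_num : (0:ℝ) < 2000000)]
        linarith [key M hM]
      rw [div_le_iff₀ (by norm_num : (0:ℝ) < 2000000)] at hdiv
      rw [traceNorm1]
      linarith
    · -- bounded depth
      rcases collapse hl hlen t with ⟨k, hk, hev⟩ | ⟨i, hi, _, _, hev⟩
      · refine ⟨{xx l k, nbr l k}, ?_, ?_, ?_⟩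
        · intro y hy
          rcases hy with h | h
          · exact (hmem y).mp (h ▸ xx_mem hk)
          · exact (hmem y).mp (h ▸ nbr_mem hlen hk)
        · exact le_trans (Set.ncard_insert_le _ _) (by simp [Set.ncard_singleton])
        · intro f g hfg m hm
          have hRfg : RR l f k = RR l g k := by
            funext s
            rw [RR, RR, dd, dd, hfg _ (by simp), hfg _ (by simp)]
          show iteratedDeriv m (Lfun l f) t = iteratedDeriv m (Lfun l g) t
          rw [iteratedDeriv_congr (hev f) (by omega), hRfg,
            ← iteratedDeriv_congr (hev g) (by omega)]
      · refine ⟨{xx l i, xx l (i+1), nbr l i, nbr l (i+1)}, ?_, ?_, ?_⟩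
        · intro y hy
          rcases hy with h | h | h | h
          · exact (hmem y).mp (h ▸ xx_mem (by omega))
          · exact (hmem y).mp (h ▸ xx_mem hi)
          · exact (hmem y).mp (h ▸ nbr_mem hlen (by omega))
          · exact (hmem y).mp (h ▸ nbr_mem hlen hi)
        · refine le_trans (Set.ncard_insert_le _ _) ?_
          have h2 := Set.ncard_insert_le (xx l (i+1)) ({nbr l i, nbr l (i+1)} : Set ℝ)
          have h3 := Set.ncard_insert_le (nbr l i) ({nbr l (i+1)} : Set ℝ)
          have h4 : ({nbr l (i+1)} : Set ℝ).ncard = 1 := Set.ncard_singleton _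
          omega
        · intro f g hfg m hm
          have hR1 : RR l f i = RR l g i := by
            funext s
            rw [RR, RR, dd, dd, hfg _ (by simp), hfg _ (by simp)]
          have hR2 : RR l f (i+1) = RR l g (i+1) := by
            funext s
            rw [RR, RR, dd, dd, hfg _ (by simp), hfg _ (by simp)]
          have hGfg : (fun s => RR l f i s + (RR l f (i+1) s - RR l f i s) * th l i s)
              = (fun s => RR l g i s + (RR l g (i+1) s - RR l g i s) * th l i s) := by
            rw [hR1, hR2]
          show iteratedDeriv m (Lfun l f) t = iteratedDeriv m (Lfun l g) t
          rw [iteratedDeriv_congr (hev f) (by omega), hGfg,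
            ← iteratedDeriv_congr (hev g) (by omega)]

end
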